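/- arXiv:2105.01711 — 3 statements merged into one kernel-verified Lean document; each statement's English description precedes it below -/
import Mathlib

section
/- Let n ≥ 1 and let q be an equivalence relation (setoid) on Fin n, regarded as an element of the lattice of equivalence relations on Fin n ordered by refinement (r ≤ s iff r-equivalence implies s-equivalence; the bottom element ⊥ is equality). Then the Möbius function of this finite lattice satisfies μ(⊥, q) = ∏_{c} (−1)^{|c|−1} (|c|−1)!, the product ranging over the equivalence classes c of q, where |c| denotes the cardinality of c. Equivalently, in the paper's dual convention with the discrete partition as top element 1̂, μ(p, 1̂) = ∏_{b block of p} (−1)^{|b|−1}(|b|−1)!, so the unsigned Möbius number is ∏_b (|b|−1)!. -/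
open scoped Classical

/-- The Möbius function of a finite partial order: `μ(x,x) = 1` and
`∑_{x ≤ z ≤ y} μ(x,z) = 0` for `x < y` (with `μ(x,y) = 0` when `x ≰ y`). -/
noncomputable def orderMoebius {α : Type*} [PartialOrder α] [Finite α] (x : α) : α → ℤ
  | y =>
    if x = y then 1
    else - ∑ᶠ z : {z : α // x ≤ z ∧ z < y}, orderMoebius x z.1
  termination_by y => Nat.card {w : α // w < y}
  decreasing_by
    rename_i z
    have hz : (z : α) < y := z.2.2
    have h3 : {w : α | w < (z : α)} ⊂ {w : α | w < y} :=
      ⟨fun w hw => lt_trans hw hz, fun h => lt_irrefl _ (h hz)⟩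
    exact Set.ncard_lt_ncard h3 (Set.toFinite _)

instance {α : Type*} [Finite α] : Finite (Setoid α) :=
  Finite.of_injective (fun s : Setoid α => s.r) fun s t h => by
    cases s; cases t; simp only at h; subst h; rfl

section AuxProof
open Equiv Finset
section Cyc
variable {α : Type*} [Fintype α] [DecidableEq α]

/-- The setoid whose classes are the cycles (orbits) of a permutation. -/
def cycSetoid (σ : Equiv.Perm α) : Setoid α :=
  ⟨σ.SameCycle, ⟨fun x => Equiv.Perm.SameCycle.refl σ x, Equiv.Perm.SameCycle.symm,
    Equiv.Perm.SameCycle.trans⟩⟩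

lemma rel_zpow (q : Setoid α) (σ : Equiv.Perm α) (h : ∀ x, q x (σ x)) :
    ∀ (i : ℤ) (x : α), q x ((σ ^ i) x) := by
  have hn : ∀ (n : ℕ) (x : α), q x ((σ ^ n) x) := by
    intro n
    induction n with
    | zero => intro x; simpa using q.refl x
    | succ m ih =>
      intro x
      have : (σ ^ (m + 1)) x = (σ ^ m) (σ x) := by
        rw [pow_succ]; rfl
      rw [this]
      exact q.trans (h x) (ih (σ x))
  intro i x
  rcases i with (m | m)
  · simpa using hn m x
  · set y := (σ ^ (Int.negSucc m)) x with hy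
    have : (σ ^ (m + 1 : ℕ)) y = x := by
      rw [hy, zpow_negSucc]
      simp
    have h1 : q y ((σ ^ (m + 1 : ℕ)) y) := hn (m + 1) y
    rw [this] at h1
    exact q.symm h1

lemma cycSetoid_le_iff (σ : Equiv.Perm α) (q : Setoid α) :
    cycSetoid σ ≤ q ↔ ∀ x, q x (σ x) := by
  constructor
  · intro h x
    exact h ⟨1, by simp⟩
  · rintro h x y ⟨i, rfl⟩
    exact rel_zpow q σ h i x

lemma cycSetoid_le_bot_iff (σ : Equiv.Perm α) : cycSetoid σ ≤ ⊥ ↔ σ = 1 := by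
  rw [cycSetoid_le_iff]
  constructor
  · intro h
    ext x
    exact ((h x) : x = σ x).symm
  · rintro rfl x
    exact rfl

end Cyc

section Key
variable {n : ℕ}

noncomputable def partG (n : ℕ) (q : Setoid (Fin n)) : ℤ :=
  ∏ᶠ c : Quotient q,
    (-1 : ℤ) ^ (Nat.card {y : Fin n // Quotient.mk q y = c} - 1) *
      (Nat.factorial (Nat.card {y : Fin n // Quotient.mk q y = c} - 1) : ℤ)

section PermCongr
variable {γ δ : Type*}

/-- `Equiv.permCongr` as a multiplicative equivalence. -/
def permCongrMul (e : γ ≃ δ) : Equiv.Perm γ ≃* Equiv.Perm δ :=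
  { e.permCongr with
    map_mul' := by
      intro f g
      ext x
      simp [Equiv.permCongr_apply] }

lemma permCongr_zpow (e : γ ≃ δ) (f : Equiv.Perm γ) (i : ℤ) :
    e.permCongr (f ^ i) = (e.permCongr f) ^ i :=
  map_zpow (permCongrMul e) f i

lemma sameCycle_permCongr (e : γ ≃ δ) (f : Equiv.Perm γ) {x y : γ}
    (h : f.SameCycle x y) : (e.permCongr f).SameCycle (e x) (e y) := by
  obtain ⟨i, hi⟩ := h
  exact ⟨i, by rw [← permCongr_zpow]; simp [Equiv.permCongr_apply, hi]⟩

lemma isCycleOn_univ_permCongr (e : γ ≃ δ) (f : Equiv.Perm γ)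
    (h : f.IsCycleOn Set.univ) : (e.permCongr f).IsCycleOn Set.univ := by
  refine ⟨(e.permCongr f).bijective.bijOn_univ, ?_⟩
  intro x _ y _
  have := sameCycle_permCongr e f (h.2 (Set.mem_univ (e.symm x)) (Set.mem_univ (e.symm y)))
  simpa using this

end PermCongr

section FinRotate

open Fin.NatCast in
lemma pow_finRotate (k : ℕ) (d : ℕ) (i : Fin (k + 1)) :
    ((finRotate (k + 1)) ^ d) i = i + (d : Fin (k + 1)) := by
  induction d with
  | zero => simp
  | succ m ih =>
    rw [pow_succ']
    have : ((finRotate (k+1)) * ((finRotate (k+1)) ^ m)) i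
        = finRotate (k+1) (((finRotate (k+1)) ^ m) i) := rfl
    rw [this, ih, finRotate_succ_apply]
    push_cast
    exact add_assoc _ _ _

lemma isCycleOn_finRotate_univ (k : ℕ) : (finRotate (k + 1)).IsCycleOn Set.univ := by
  refine ⟨(finRotate (k + 1)).bijective.bijOn_univ, ?_⟩
  intro i _ j _
  refine ⟨(((j - i : Fin (k+1))).val : ℤ), ?_⟩
  rw [zpow_natCast, pow_finRotate]
  simp [Fin.cast_val_eq_self]
end FinRotate

section Count
variable {β : Type*} [Fintype β] [DecidableEq β]

lemma card_fullCycles (k : ℕ) (hcard : Fintype.card β = k + 1) :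
    (univ.filter (fun τ : Equiv.Perm β => τ.IsCycleOn Set.univ)).card = Nat.factorial k := by
  have hne : Nonempty β := Fintype.card_pos_iff.mp (by omega)
  obtain ⟨x0⟩ := hne
  set r := finRotate (k + 1) with hr
  -- the set of pointed equivs
  have step1 : (univ.filter (fun e : Fin (k+1) ≃ β => e 0 = x0)).card
      = (univ.filter (fun τ : Equiv.Perm β => τ.IsCycleOn Set.univ)).card := by
    apply Finset.card_bij (fun e _ => e.permCongr r)
    · intro e he
      simp only [mem_filter, mem_univ, true_and] at *
      exact isCycleOn_univ_permCongr e r (isCycleOn_finRotate_univ k)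
    · -- injectivity
      intro e he e' he' hee
      simp only [mem_filter, mem_univ, true_and] at he he'
      have hd : ∀ y : Fin (k+1), e'.symm (e (r y)) = r (e'.symm (e y)) := by
        intro y
        have := congrArg (fun τ : Equiv.Perm β => τ (e y)) hee
        simp only [Equiv.permCongr_apply, Equiv.symm_apply_apply] at this
        rw [this]
        simp [Equiv.permCongr_apply]
      have hd0 : e'.symm (e 0) = 0 := by rw [he, ← he', Equiv.symm_apply_apply]
      have hdpow : ∀ v : ℕ, e'.symm (e ((r ^ v) 0)) = (r ^ v) 0 := by
        intro v
        induction v with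
        | zero => simpa using hd0
        | succ m ih =>
          have h1 : (r ^ (m+1)) 0 = r ((r ^ m) 0) := by rw [pow_succ']; rfl
          rw [h1, hd, ih]
      have : ∀ i : Fin (k+1), e'.symm (e i) = i := by
        intro i
        have h2 : (r ^ i.val) 0 = i := by
          rw [hr, pow_finRotate]
          simp [Fin.cast_val_eq_self]
        rw [← h2, hdpow]
      ext i
      exact (Equiv.symm_apply_eq e').mp (this i)
    · -- surjectivity
      intro τ hτ
      simp only [mem_filter, mem_univ, true_and] at hτ
      have hτuniv : τ.IsCycleOn (↑(univ : Finset β) : Set β) := by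
        rw [Finset.coe_univ]; exact hτ
      have hcards : (univ : Finset β).card = k + 1 := by
        rw [Finset.card_univ, hcard]
      have hinj : Function.Injective (fun i : Fin (k+1) => (τ ^ i.val) x0) := by
        intro i j hij
        simp only at hij
        -- wlog i.val ≤ j.val
        have key : ∀ a b : Fin (k+1), a.val ≤ b.val → (τ ^ a.val) x0 = (τ ^ b.val) x0 → a = b := by
          intro a b hab heq
          have h1 : (τ ^ (b.val - a.val)) x0 = x0 := by
            have h2 : (τ ^ a.val) ((τ ^ (b.val - a.val)) x0) = (τ ^ a.val) x0 := by
              rw [← Equiv.Perm.mul_apply, ← pow_add]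
              rw [Nat.add_sub_cancel' hab, heq]
            exact (Equiv.injective _) h2
          have h3 := (hτuniv.pow_apply_eq (Finset.mem_univ x0)).mp h1
          rw [hcards] at h3
          have h5 : b.val - a.val < k + 1 := by omega
          have h4 : b.val - a.val = 0 := Nat.eq_zero_of_dvd_of_lt h3 h5
          exact Fin.ext (by omega)
        rcases le_total i.val j.val with h | h
        · exact key i j h hij
        · exact (key j i h hij.symm).symm
      have hbij : Function.Bijective (fun i : Fin (k+1) => (τ ^ i.val) x0) := by
        rw [Fintype.bijective_iff_injective_and_card]
        exact ⟨hinj, by simp [hcard]⟩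
      refine ⟨Equiv.ofBijective _ hbij, ?_, ?_⟩
      · simp only [mem_filter, mem_univ, true_and]
        simp [Equiv.ofBijective_apply]
      · -- permCongr equals τ
        set e := Equiv.ofBijective _ hbij with he
        ext b
        rw [Equiv.permCongr_apply]
        set i := e.symm b with hi
        have hb : b = (τ ^ i.val) x0 := by
          rw [hi, ← Equiv.ofBijective_apply _ hbij (e.symm b), ← he, Equiv.apply_symm_apply]
        have hri : e (r i) = (τ ^ ((r i).val)) x0 := rfl
        rw [hri, hb]
        have hrv : r i = i + 1 := by rw [hr, finRotate_succ_apply]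
        rcases Nat.lt_or_ge (i.val + 1) (k + 1) with hlt | hge
        · have : (r i).val = i.val + 1 := by
            rw [hrv, Fin.val_add_one_of_lt
              (by rw [Fin.lt_iff_val_lt_val, Fin.val_last]; omega)]
          rw [this, pow_succ']
          rfl
        · have hival : i.val = k := by have := i.isLt; omega
          have : (r i).val = 0 := by
            rw [hrv, Fin.val_add_one]
            split_ifs with hl
            · rfl
            · exfalso; apply hl; exact Fin.ext (by simp [Fin.last, hival])
          rw [this]
          simp only [pow_zero, Equiv.Perm.coe_one, id_eq]
          have hh := hτuniv.pow_card_apply (Finset.mem_univ x0)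
          rw [hcards] at hh
          rw [hival]
          nth_rewrite 1 [← hh]
          rw [pow_succ']
          rfl
  -- now count pointed equivs
  have step2 : (univ.filter (fun e : Fin (k+1) ≃ β => e 0 = x0)).card
      = Nat.factorial k := by
    rw [← Fintype.card_subtype]
    have E1 : {e : Fin (k+1) ≃ β // e 0 = x0} ≃ {e : Option (Fin k) ≃ β // e none = x0} := by
      refine Equiv.subtypeEquiv (Equiv.equivCongr (finSuccEquiv k) (Equiv.refl β)) ?_
      intro e
      simp [Equiv.equivCongr, finSuccEquiv_symm_none]
    have E2 := Equiv.optionSubtype (α := Fin k) x0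
    have hc : Fintype.card {y : β // y ≠ x0} = k := by
      have := Fintype.card_subtype_compl (fun y : β => y = x0)
      simp only [Fintype.card_subtype_eq] at this
      rw [this, hcard]
      omega
    have E3 : Fin k ≃ {y : β // y ≠ x0} := Fintype.equivOfCardEq (by simp [hc])
    rw [Fintype.card_congr (E1.trans E2)]
    rw [Fintype.card_equiv E3]
    simp
  omega

end Count

section Block
variable {β : Type*} [Fintype β] [DecidableEq β]

lemma sign_of_isCycleOn_univ {τ : Equiv.Perm β} (k : ℕ) (hcard : Fintype.card β = k + 1)
    (h : τ.IsCycleOn Set.univ) : (Equiv.Perm.sign τ : ℤ) = (-1) ^ k := by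
  rcases Nat.eq_zero_or_pos k with rfl | hk
  · have hsub : Subsingleton β := Fintype.card_le_one_iff_subsingleton.mp (by omega)
    have hτ1 : τ = 1 := by ext x; exact Subsingleton.elim _ _
    simp [hτ1]
  · have hnt : (Set.univ : Set β).Nontrivial := by
      rw [Set.nontrivial_univ_iff]
      exact Fintype.one_lt_card_iff_nontrivial.mp (by omega)
    obtain ⟨x⟩ : Nonempty β := Fintype.card_pos_iff.mp (by omega)
    have hx : τ x ≠ x := h.apply_ne hnt (Set.mem_univ x)
    have hcyc : τ.IsCycle := (Equiv.Perm.isCycle_iff_sameCycle hx).mpr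
      (fun {y} => ⟨fun _ => h.apply_ne hnt (Set.mem_univ y),
        fun _ => h.2 (Set.mem_univ x) (Set.mem_univ y)⟩)
    have hsupp : τ.support = univ := by
      ext y
      simp only [Equiv.Perm.mem_support, mem_univ, iff_true]
      exact h.apply_ne hnt (Set.mem_univ y)
    have hs := hcyc.sign
    rw [hsupp, Finset.card_univ, hcard] at hs
    rw [hs]
    push_cast
    rw [pow_succ]
    ring

lemma block_sum (k : ℕ) (hcard : Fintype.card β = k + 1) :
    ∑ τ ∈ univ.filter (fun τ : Equiv.Perm β => τ.IsCycleOn Set.univ),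
      (Equiv.Perm.sign τ : ℤ) = (-1) ^ k * (Nat.factorial k : ℤ) := by
  rw [Finset.sum_congr rfl
    (fun τ hτ => sign_of_isCycleOn_univ k hcard (by simpa using (Finset.mem_filter.mp hτ).2))]
  rw [Finset.sum_const, card_fullCycles k hcard]
  push_cast
  ring

end Block

section Sigma
variable {ι : Type*} [Fintype ι] [DecidableEq ι] {B : ι → Type*}
  [∀ i, Fintype (B i)] [∀ i, DecidableEq (B i)]

def sigmaSubEquiv (c : ι) : B c ≃ {x : Σ i, B i // x.1 = c} where
  toFun u := ⟨⟨c, u⟩, rfl⟩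
  invFun x := x.2 ▸ x.1.2
  left_inv u := rfl
  right_inv := by rintro ⟨⟨d, u⟩, h⟩; subst h; rfl

lemma sigmaCongrRight_single (c : ι) (τ : Equiv.Perm (B c)) :
    Equiv.Perm.sigmaCongrRight (Pi.mulSingle c τ)
      = τ.extendDomain (sigmaSubEquiv c) := by
  apply Equiv.ext
  rintro ⟨d, u⟩
  rcases eq_or_ne d c with rfl | hdc
  · have h1 : Equiv.Perm.sigmaCongrRight (Pi.mulSingle d τ) ⟨d, u⟩ = ⟨d, τ u⟩ := by
      simp
    have h2 : τ.extendDomain (sigmaSubEquiv d) ⟨d, u⟩ = ⟨d, τ u⟩ := by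
      rw [Equiv.Perm.extendDomain_apply_subtype τ (sigmaSubEquiv d) (rfl : (⟨d,u⟩ : Σ i, B i).1 = d)]
      rfl
    rw [h1, h2]
  · have h1 : Equiv.Perm.sigmaCongrRight (Pi.mulSingle c τ) ⟨d, u⟩ = ⟨d, u⟩ := by
      have h0 : (Pi.mulSingle c τ : ∀ i, Equiv.Perm (B i)) d = 1 := by
        simp [Pi.mulSingle, Function.update_of_ne hdc]
      have h3 : (Equiv.Perm.sigmaCongrRight (Pi.mulSingle c τ)) ⟨d, u⟩
          = ⟨d, ((Pi.mulSingle c τ : ∀ i, Equiv.Perm (B i)) d) u⟩ := rfl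
      rw [h3, h0]
      rfl
    have h2 : τ.extendDomain (sigmaSubEquiv c) ⟨d, u⟩ = ⟨d, u⟩ :=
      Equiv.Perm.extendDomain_apply_not_subtype τ (sigmaSubEquiv c) hdc
    rw [h1, h2]

lemma sign_sigmaCongrRight_aux (s : Finset ι) :
    ∀ F : ∀ i, Equiv.Perm (B i), (∀ i ∉ s, F i = 1) →
      Equiv.Perm.sign (Equiv.Perm.sigmaCongrRight F) = ∏ i ∈ s, Equiv.Perm.sign (F i) := by
  induction s using Finset.induction_on with
  | empty =>
    intro F hF
    have : F = 1 := by funext i; exact hF i (by simp)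
    subst this
    rw [Equiv.Perm.sigmaCongrRight_one]
    simp
  | @insert a s ha ih =>
    intro F hF
    set F' : ∀ i, Equiv.Perm (B i) := Function.update F a 1 with hF'
    have hsplit : F = Pi.mulSingle a (F a) * F' := by
      funext j
      rcases eq_or_ne j a with rfl | hj
      · simp [hF', Pi.mulSingle_eq_same]
      · simp [hF', Pi.mulSingle_eq_of_ne hj, Function.update_of_ne hj]
    rw [hsplit, ← Equiv.Perm.sigmaCongrRight_mul, map_mul]
    rw [sigmaCongrRight_single, Equiv.Perm.sign_extendDomain]
    rw [ih F' (fun i hi => by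
      rcases eq_or_ne i a with rfl | hia
      · simp [hF']
      · simp only [hF', Function.update_of_ne hia]
        exact hF i (by simp [hi, hia]))]
    rw [Finset.prod_insert ha]
    congr 1
    · congr 1
      rw [hsplit]
      simp [Pi.mulSingle_eq_same, hF', Function.update_self]
    · apply Finset.prod_congr rfl
      intro j hj
      have hja : j ≠ a := by rintro rfl; exact ha hj
      rw [hsplit]
      simp [Pi.mulSingle_eq_of_ne hja, hF', Function.update_of_ne hja]

lemma sign_sigmaCongrRight (F : ∀ i, Equiv.Perm (B i)) :
    Equiv.Perm.sign (Equiv.Perm.sigmaCongrRight F) = ∏ i, Equiv.Perm.sign (F i) :=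
  sign_sigmaCongrRight_aux Finset.univ F (fun i hi => absurd (Finset.mem_univ i) hi)

end Sigma

section Fiber
variable {n : ℕ} (q : Setoid (Fin n))

lemma pres_of_cyc {σ : Equiv.Perm (Fin n)} (h : cycSetoid σ = q) (x : Fin n) :
    Quotient.mk q (σ x) = Quotient.mk q x := by
  have h1 : (cycSetoid σ) x (σ x) := ⟨1, by simp⟩
  have h2 : q x (σ x) := h ▸ h1
  exact Quotient.sound (q.symm h2)

/-- Restriction of a class-preserving permutation to a class. -/
def resp (σ : Equiv.Perm (Fin n)) (h : ∀ x, Quotient.mk q (σ x) = Quotient.mk q x)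
    (c : Quotient q) : Equiv.Perm {y : Fin n // Quotient.mk q y = c} :=
  σ.subtypePerm (fun x => by rw [h x])

/-- Assembling a permutation from block permutations. -/
def phi (F : ∀ c : Quotient q, Equiv.Perm {y : Fin n // Quotient.mk q y = c}) :
    Equiv.Perm (Fin n) :=
  (Equiv.sigmaFiberEquiv (Quotient.mk q)).permCongr (Equiv.Perm.sigmaCongrRight F)

lemma phi_apply (F : ∀ c : Quotient q, Equiv.Perm {y : Fin n // Quotient.mk q y = c})
    (x : Fin n) : phi q F x = (F (Quotient.mk q x) ⟨x, rfl⟩).val := rfl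

lemma phi_pres (F : ∀ c : Quotient q, Equiv.Perm {y : Fin n // Quotient.mk q y = c})
    (x : Fin n) : Quotient.mk q (phi q F x) = Quotient.mk q x := by
  rw [phi_apply]
  exact (F (Quotient.mk q x) ⟨x, rfl⟩).property

lemma sigmaCongrRight_zpow {ι : Type*} {B : ι → Type*}
    (F : ∀ i, Equiv.Perm (B i)) (i : ℤ) :
    (Equiv.Perm.sigmaCongrRight F) ^ i = Equiv.Perm.sigmaCongrRight (F ^ i) :=
  (map_zpow (Equiv.Perm.sigmaCongrRightHom B) F i).symm

lemma cyc_phi (F : ∀ c : Quotient q, Equiv.Perm {y : Fin n // Quotient.mk q y = c})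
    (hF : ∀ c, (F c).IsCycleOn Set.univ) : cycSetoid (phi q F) = q := by
  apply le_antisymm
  · rw [cycSetoid_le_iff]
    intro x
    exact q.symm (Quotient.exact (phi_pres q F x))
  · intro x y hxy
    have hy : Quotient.mk q y = Quotient.mk q x := Quotient.sound (q.symm hxy)
    set c := Quotient.mk q x with hc
    obtain ⟨i, hi⟩ := (hF c).2 (Set.mem_univ (⟨x, rfl⟩ : {y : Fin n // Quotient.mk q y = c}))
      (Set.mem_univ (⟨y, hy⟩ : {y : Fin n // Quotient.mk q y = c}))
    have hx' : (Equiv.sigmaFiberEquiv (Quotient.mk q))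
        (⟨c, ⟨x, rfl⟩⟩ : Σ d : Quotient q, {y : Fin n // Quotient.mk q y = d}) = x := rfl
    have hy' : (Equiv.sigmaFiberEquiv (Quotient.mk q))
        (⟨c, ⟨y, hy⟩⟩ : Σ d : Quotient q, {y : Fin n // Quotient.mk q y = d}) = y := rfl
    rw [← hx', ← hy']
    apply sameCycle_permCongr
    refine ⟨i, ?_⟩
    calc ((Equiv.Perm.sigmaCongrRight F) ^ i)
          (⟨c, ⟨x, rfl⟩⟩ : Σ d : Quotient q, {y : Fin n // Quotient.mk q y = d})
        = Equiv.Perm.sigmaCongrRight (F ^ i) ⟨c, ⟨x, rfl⟩⟩ := by rw [sigmaCongrRight_zpow]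
      _ = ⟨c, ⟨y, hy⟩⟩ := congrArg (Sigma.mk c) hi

lemma resp_isCycleOn {σ : Equiv.Perm (Fin n)} (h : cycSetoid σ = q)
    (hpres : ∀ x, Quotient.mk q (σ x) = Quotient.mk q x) (c : Quotient q) :
    (resp q σ hpres c).IsCycleOn Set.univ := by
  refine ⟨(resp q σ hpres c).bijective.bijOn_univ, ?_⟩
  rintro ⟨x, hx⟩ - ⟨y, hy⟩ -
  have hrel : q x y := Quotient.exact (hx.trans hy.symm)
  have hsc : σ.SameCycle x y := (le_of_eq h.symm) hrel
  obtain ⟨i, hi⟩ := hsc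
  refine ⟨i, ?_⟩
  rw [resp, Equiv.Perm.subtypePerm_zpow]
  exact Subtype.ext hi

lemma phi_resp (σ : Equiv.Perm (Fin n))
    (hpres : ∀ x, Quotient.mk q (σ x) = Quotient.mk q x) :
    phi q (resp q σ hpres) = σ := by
  apply Equiv.ext
  intro x
  rfl

lemma resp_phi (F : ∀ c : Quotient q, Equiv.Perm {y : Fin n // Quotient.mk q y = c})
    (hpres : ∀ x, Quotient.mk q (phi q F x) = Quotient.mk q x) (c : Quotient q) :
    resp q (phi q F) hpres c = F c := by
  apply Equiv.ext
  rintro ⟨x, hx⟩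
  apply Subtype.ext
  subst hx
  rfl

lemma sign_eq_prod_resp (σ : Equiv.Perm (Fin n))
    (hpres : ∀ x, Quotient.mk q (σ x) = Quotient.mk q x) :
    Equiv.Perm.sign σ = ∏ c : Quotient q, Equiv.Perm.sign (resp q σ hpres c) := by
  conv_lhs => rw [← phi_resp q σ hpres]
  rw [phi, Equiv.Perm.sign_permCongr, sign_sigmaCongrRight]

set_option maxHeartbeats 2000000 in
lemma fiber_sum (q : Setoid (Fin n)) :
    ∑ σ ∈ univ.filter (fun σ : Equiv.Perm (Fin n) => cycSetoid σ = q),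
      (Equiv.Perm.sign σ : ℤ) = partG n q := by
  classical
  have hcardpos : ∀ c : Quotient q,
      ∃ k : ℕ, Fintype.card {y : Fin n // Quotient.mk q y = c} = k + 1 := by
    intro c
    obtain ⟨x, rfl⟩ := Quotient.exists_rep c
    have : Nonempty {y : Fin n // Quotient.mk q y = Quotient.mk q x} := ⟨⟨x, rfl⟩⟩
    have hpos := Fintype.card_pos_iff.mpr this
    exact ⟨Fintype.card {y : Fin n // Quotient.mk q y = Quotient.mk q x} - 1, by omega⟩
  have step1 : ∑ σ ∈ univ.filter (fun σ : Equiv.Perm (Fin n) => cycSetoid σ = q),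
      (Equiv.Perm.sign σ : ℤ)
      = ∑ F ∈ Fintype.piFinset (fun c : Quotient q =>
          univ.filter (fun τ : Equiv.Perm {y : Fin n // Quotient.mk q y = c} =>
            τ.IsCycleOn Set.univ)),
        ∏ c : Quotient q, (Equiv.Perm.sign (F c) : ℤ) := by
    refine Finset.sum_bij'
      (i := fun σ hσ => resp q σ (pres_of_cyc q (by
        simpa using (Finset.mem_filter.mp hσ).2)))
      (j := fun F hF => phi q F) ?hi ?hj ?li ?ri ?hval
    case hi =>
      intro σ hσ
      simp only [Finset.mem_filter, Finset.mem_univ, true_and] at hσ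
      rw [Fintype.mem_piFinset]
      intro c
      simp only [Finset.mem_filter, Finset.mem_univ, true_and]
      exact resp_isCycleOn q hσ _ c
    case hj =>
      intro F hF
      rw [Fintype.mem_piFinset] at hF
      simp only [Finset.mem_filter, Finset.mem_univ, true_and]
      apply cyc_phi
      intro c
      have := hF c
      simpa using this
    case li =>
      intro σ hσ
      exact phi_resp q σ _
    case ri =>
      intro F hF
      funext c
      exact resp_phi q F _ c
    case hval =>
      intro σ hσ
      rw [sign_eq_prod_resp q σ (pres_of_cyc q (by
        simpa using (Finset.mem_filter.mp hσ).2))]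
      push_cast
      rfl
  have step2 : ∑ F ∈ Fintype.piFinset (fun c : Quotient q =>
          univ.filter (fun τ : Equiv.Perm {y : Fin n // Quotient.mk q y = c} =>
            τ.IsCycleOn Set.univ)),
        ∏ c : Quotient q, (Equiv.Perm.sign (F c) : ℤ)
      = ∏ c : Quotient q, ∑ τ ∈ univ.filter
          (fun τ : Equiv.Perm {y : Fin n // Quotient.mk q y = c} => τ.IsCycleOn Set.univ),
        (Equiv.Perm.sign τ : ℤ) := by
    rw [Finset.prod_univ_sum]
  rw [step1, step2]
  rw [partG, finprod_eq_prod_of_fintype]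
  apply Finset.prod_congr rfl
  intro c _
  obtain ⟨k, hk⟩ := hcardpos c
  rw [block_sum k hk]
  rw [Nat.card_eq_fintype_card, hk]
  simp

end Fiber


lemma cycSetoid_eq_bot_iff {α : Type*} [Fintype α] [DecidableEq α] (σ : Equiv.Perm α) :
    cycSetoid σ = ⊥ ↔ σ = 1 := by
  constructor
  · intro h; exact (cycSetoid_le_bot_iff σ).1 h.le
  · rintro rfl; exact le_antisymm ((cycSetoid_le_bot_iff 1).2 rfl) bot_le

lemma partG_bot : partG n (⊥ : Setoid (Fin n)) = 1 := by
  have h := fiber_sum (⊥ : Setoid (Fin n))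
  rw [← h]
  have : univ.filter (fun σ : Equiv.Perm (Fin n) => cycSetoid σ = ⊥) = {1} := by
    ext σ
    simp only [mem_filter, mem_univ, true_and, mem_singleton]
    constructor
    · intro h2; exact (cycSetoid_le_bot_iff σ).1 (le_of_eq h2)
    · rintro rfl
      exact le_antisymm ((cycSetoid_le_bot_iff 1).2 rfl) bot_le
  rw [this]
  simp

lemma group_sum (q : Setoid (Fin n)) :
    ∑ σ ∈ univ.filter (fun σ : Equiv.Perm (Fin n) => cycSetoid σ ≤ q),
      (Equiv.Perm.sign σ : ℤ) = if q = ⊥ then 1 else 0 := by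
  split_ifs with hq
  · subst hq
    have : univ.filter (fun σ : Equiv.Perm (Fin n) => cycSetoid σ ≤ ⊥) = {1} := by
      ext σ
      simp [cycSetoid_eq_bot_iff]
    rw [this]; simp
  · -- q ≠ ⊥ : find a ≠ b related, use sign-reversing involution by swap a b
    have hab : ∃ a b : Fin n, q a b ∧ a ≠ b := by
      by_contra hcon
      push_neg at hcon
      apply hq
      apply le_antisymm _ bot_le
      intro x y hxy
      by_contra hne
      exact hne (hcon x y hxy)
    obtain ⟨a, b, hrel, hne⟩ := hab
    set τ := Equiv.swap a b with hτ
    have hτmem : ∀ y : Fin n, q y (τ y) := by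
      intro y
      rcases eq_or_ne y a with rfl | hya
      · rw [hτ, Equiv.swap_apply_left]; exact hrel
      rcases eq_or_ne y b with rfl | hyb
      · rw [hτ, Equiv.swap_apply_right]; exact q.symm hrel
      · rw [hτ, Equiv.swap_apply_of_ne_of_ne hya hyb]
    have hmem : ∀ σ : Equiv.Perm (Fin n), cycSetoid σ ≤ q → cycSetoid (τ * σ) ≤ q := by
      intro σ hσ
      rw [cycSetoid_le_iff] at hσ ⊢
      intro x
      exact q.trans (hσ x) (hτmem (σ x))
    have key : ∑ σ ∈ univ.filter (fun σ : Equiv.Perm (Fin n) => cycSetoid σ ≤ q),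
        (Equiv.Perm.sign σ : ℤ)
        = ∑ σ ∈ univ.filter (fun σ : Equiv.Perm (Fin n) => cycSetoid σ ≤ q),
        (Equiv.Perm.sign (τ * σ) : ℤ) := by
      apply Finset.sum_nbij' (fun σ => τ * σ) (fun σ => τ * σ)
      · intro σ hσ
        simp only [mem_filter, mem_univ, true_and] at hσ ⊢
        exact hmem σ hσ
      · intro σ hσ
        simp only [mem_filter, mem_univ, true_and] at hσ ⊢
        exact hmem σ hσ
      · intro σ _; rw [← mul_assoc, hτ, Equiv.swap_mul_self, one_mul]
      · intro σ _; rw [← mul_assoc, hτ, Equiv.swap_mul_self, one_mul]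
      · intro σ hσ
        simp only [mem_filter, mem_univ, true_and] at hσ
        rw [← mul_assoc, hτ, Equiv.swap_mul_self, one_mul]
    have key2 : ∀ σ : Equiv.Perm (Fin n),
        (Equiv.Perm.sign (τ * σ) : ℤ) = -(Equiv.Perm.sign σ : ℤ) := by
      intro σ
      rw [map_mul, hτ, Equiv.Perm.sign_swap hne]
      push_cast
      ring
    rw [Finset.sum_congr rfl (fun σ _ => key2 σ)] at key
    rw [Finset.sum_neg_distrib] at key
    linarith
end Key

noncomputable instance setoidFintype {α : Type*} [Finite α] : Fintype (Setoid α) :=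
  Fintype.ofFinite _

lemma sum_le {n : ℕ} (q : Setoid (Fin n)) :
    ∑ z ∈ univ.filter (fun z : Setoid (Fin n) => z ≤ q), partG n z
      = if q = ⊥ then 1 else 0 := by
  rw [← group_sum q]
  rw [← Finset.sum_fiberwise_of_maps_to (g := cycSetoid)
    (t := univ.filter (fun z : Setoid (Fin n) => z ≤ q))
    (fun σ hσ => by
      simp only [mem_filter, mem_univ, true_and] at *
      exact hσ)]
  apply Finset.sum_congr rfl
  intro z hz
  simp only [mem_filter, mem_univ, true_and] at hz
  rw [← fiber_sum z]
  congr 1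
  ext σ
  simp only [mem_filter, mem_univ, true_and]
  constructor
  · intro hh
    exact ⟨hh.le.trans hz, hh⟩
  · intro hh
    exact hh.2

lemma moebius_eq_partG (n : ℕ) (q : Setoid (Fin n)) : orderMoebius ⊥ q = partG n q := by
  induction q using WellFoundedLT.induction with
  | ind q IH =>
  rw [orderMoebius]
  split_ifs with h
  · rw [← h, partG_bot]
  · have h1 : ∑ᶠ z : {z : Setoid (Fin n) // ⊥ ≤ z ∧ z < q}, orderMoebius ⊥ z.1
        = ∑ z ∈ univ.filter (fun z : Setoid (Fin n) => z < q), partG n z := by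
      rw [finsum_eq_sum_of_fintype,
        ← Finset.sum_subtype (univ.filter (fun z : Setoid (Fin n) => ⊥ ≤ z ∧ z < q))
          (fun z => by simp) (fun z => orderMoebius ⊥ z)]
      have hf : univ.filter (fun z : Setoid (Fin n) => ⊥ ≤ z ∧ z < q)
          = univ.filter (fun z : Setoid (Fin n) => z < q) := by
        apply Finset.filter_congr
        intro z _
        simp [bot_le]
      rw [hf]
      apply Finset.sum_congr rfl
      intro z hz
      simp only [mem_filter, mem_univ, true_and] at hz
      exact IH z hz
    rw [h1]
    have h2 : univ.filter (fun z : Setoid (Fin n) => z ≤ q)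
        = insert q (univ.filter (fun z : Setoid (Fin n) => z < q)) := by
      ext z
      simp only [mem_filter, mem_univ, true_and, mem_insert]
      rw [le_iff_lt_or_eq]
      tauto
    have h3 := sum_le q
    rw [h2, Finset.sum_insert (by simp)] at h3
    rw [if_neg (fun e => h e.symm)] at h3
    linarith

end AuxProof

/-- In the lattice of equivalence relations on `Fin n` ordered by
refinement (with bottom element `⊥` the equality relation), the Möbius function satisfies
`μ(⊥, q) = ∏_c (−1)^{|c|−1} (|c|−1)!`, the product over the equivalence classes `c` of
`q`. -/
theorem moebius_partition_lattice (n : ℕ) (q : Setoid (Fin n)) :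
    orderMoebius (⊥ : Setoid (Fin n)) q =
      ∏ᶠ c : Quotient q,
        (-1 : ℤ) ^ (Nat.card {y : Fin n // Quotient.mk q y = c} - 1) *
          (Nat.factorial (Nat.card {y : Fin n // Quotient.mk q y = c} - 1) : ℤ) := by
  exact moebius_eq_partG n q
end

section
/- Let n ≥ 1. In the polynomial ring ℤ[t], ∑_{q} μ(⊥, q) · t^{n − b(q)} = ∏_{j=1}^{n−1} (1 − j·t), where the sum is over all equivalence relations q on Fin n, b(q) is the number of equivalence classes of q, ⊥ is the equality relation, and μ is the Möbius function of the lattice of equivalence relations on Fin n ordered by refinement. (This is the Whitney polynomial of the partition lattice P(n): W_{P(n)}(t) = ∑_{p ∈ P(n)} μ(p, 1̂) t^{r(p)} = ∏_{j=1}^{n−1}(1 − jt), where in the paper's convention the discrete partition is the top element 1̂ and r(p) = n − (number of blocks of p).) -/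
open scoped Classical

open Finset Polynomial

lemma orderMoebius_def {α : Type*} [PartialOrder α] [Finite α] (x y : α) :
    orderMoebius x y = if x = y then 1
      else - ∑ᶠ z : {z : α // x ≤ z ∧ z < y}, orderMoebius x z.1 := by
  rw [orderMoebius]

lemma moebius_sum {α : Type*} [PartialOrder α] [Finite α] [Fintype α] [OrderBot α] (y : α) :
    ∑ z ∈ univ.filter (· ≤ y), orderMoebius (⊥ : α) z = if y = ⊥ then 1 else 0 := by
  have hsub : ∑ᶠ z : {z : α // (⊥:α) ≤ z ∧ z < y}, orderMoebius (⊥:α) z.1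
      = ∑ z ∈ univ.filter (fun z => z < y), orderMoebius (⊥:α) z := by
    rw [finsum_eq_sum_of_fintype,
      Finset.sum_subtype (p := fun z => (⊥:α) ≤ z ∧ z < y) (univ.filter (fun z => z < y))
        (by simp) (orderMoebius (⊥:α))]
  by_cases h : y = ⊥
  · subst h
    have : univ.filter (fun z => z ≤ (⊥:α)) = {⊥} := by
      ext z; simp [le_bot_iff]
    rw [this, Finset.sum_singleton, orderMoebius_def, if_pos rfl, if_pos rfl]
  · have hy : univ.filter (· ≤ y) = insert y (univ.filter (· < y)) := by
      ext z
      simp only [mem_filter, mem_univ, true_and, mem_insert]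
      constructor
      · intro hz; rcases lt_or_eq_of_le hz with h1 | h1
        · exact Or.inr h1
        · exact Or.inl h1
      · rintro (rfl | hz)
        exacts [le_rfl, le_of_lt hz]
    rw [hy, Finset.sum_insert (by simp), orderMoebius_def, if_neg (fun hh => h hh.symm),
      hsub, if_neg h]
    ring

noncomputable local instance {α : Type*} [Finite α] : Fintype (Setoid α) := Fintype.ofFinite _

variable (n m : ℕ)

lemma card_ge_ker (q : Setoid (Fin n)) :
    Fintype.card {f : Fin n → Fin m // q ≤ Setoid.ker f} = m ^ Nat.card (Quotient q) := by
  rw [Fintype.card_congr (Setoid.liftEquiv q), Fintype.card_fun, Fintype.card_fin,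
    Nat.card_eq_fintype_card]

lemma card_ker_bot :
    Fintype.card {f : Fin n → Fin m // Setoid.ker f = ⊥} = m.descFactorial n := by
  have e1 : {f : Fin n → Fin m // Setoid.ker f = ⊥} ≃ {f : Fin n → Fin m // Function.Injective f} :=
    Equiv.subtypeEquivRight fun f => (Setoid.injective_iff_ker_bot f).symm
  rw [Fintype.card_congr (e1.trans (Equiv.subtypeInjectiveEquivEmbedding _ _)),
    Fintype.card_embedding_eq, Fintype.card_fin, Fintype.card_fin]

lemma pow_eq_sum (q : Setoid (Fin n)) :
    m ^ Nat.card (Quotient q) =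
      ∑ p : Setoid (Fin n),
        if q ≤ p then Fintype.card {f : Fin n → Fin m // Setoid.ker f = p} else 0 := by
  rw [← card_ge_ker n m q, Fintype.card_subtype]
  rw [Finset.card_eq_sum_card_fiberwise (f := fun f => Setoid.ker f) (t := univ)
    (fun f _ => mem_univ _)]
  refine Finset.sum_congr rfl fun p _ => ?_
  rw [Finset.filter_filter]
  by_cases h : q ≤ p
  · rw [if_pos h, Fintype.card_subtype]
    congr 1
    ext f
    simp only [mem_filter, mem_univ, true_and]
    exact ⟨fun ⟨_, h2⟩ => h2, fun h2 => ⟨h2 ▸ h, h2⟩⟩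
  · rw [if_neg h, Finset.card_eq_zero]
    ext f
    simp only [mem_filter, mem_univ, true_and, Finset.notMem_empty, iff_false, not_and]
    intro h1 h2
    exact h (h2 ▸ h1)

lemma cast_descFactorial (m n : ℕ) :
    (m.descFactorial n : ℤ) = ∏ j ∈ Finset.range n, ((m : ℤ) - j) := by
  by_cases h : n ≤ m
  · rw [Nat.descFactorial_eq_prod_range, Nat.cast_prod]
    refine Finset.prod_congr rfl fun j hj => ?_
    have : j ≤ m := le_trans (le_of_lt (Finset.mem_range.mp hj)) h
    push_cast [Nat.cast_sub this]
    ring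
  · push_neg at h
    rw [Nat.descFactorial_eq_zero_iff_lt.mpr h, Nat.cast_zero]
    exact (Finset.prod_eq_zero (Finset.mem_range.mpr h) (by ring)).symm

lemma eval_identity (n m : ℕ) :
    ∑ p : Setoid (Fin n), orderMoebius ⊥ p * (m : ℤ) ^ Nat.card (Quotient p)
      = ∏ j ∈ Finset.range n, ((m : ℤ) - j) := by
  have hc : ∀ p : Setoid (Fin n), ((m : ℤ)) ^ Nat.card (Quotient p) =
      ∑ r : Setoid (Fin n),
        if p ≤ r then (Fintype.card {f : Fin n → Fin m // Setoid.ker f = r} : ℤ) else 0 := by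
    intro p
    have := pow_eq_sum n m p
    have : ((m ^ Nat.card (Quotient p) : ℕ) : ℤ) = _ := congrArg (Nat.cast : ℕ → ℤ) this
    push_cast at this
    simpa using this
  calc ∑ p : Setoid (Fin n), orderMoebius ⊥ p * (m : ℤ) ^ Nat.card (Quotient p)
      = ∑ p : Setoid (Fin n), ∑ r : Setoid (Fin n),
          if p ≤ r then orderMoebius ⊥ p *
            (Fintype.card {f : Fin n → Fin m // Setoid.ker f = r} : ℤ) else 0 := by
        refine Finset.sum_congr rfl fun p _ => ?_
        rw [hc p, Finset.mul_sum]
        refine Finset.sum_congr rfl fun r _ => ?_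
        rw [mul_ite, mul_zero]
    _ = ∑ r : Setoid (Fin n),
          (∑ p ∈ univ.filter (· ≤ r), orderMoebius ⊥ p) *
            (Fintype.card {f : Fin n → Fin m // Setoid.ker f = r} : ℤ) := by
        rw [Finset.sum_comm]
        refine Finset.sum_congr rfl fun r _ => ?_
        rw [Finset.sum_mul, Finset.sum_filter]
    _ = ∑ r : Setoid (Fin n),
          (if r = ⊥ then 1 else 0) *
            (Fintype.card {f : Fin n → Fin m // Setoid.ker f = r} : ℤ) := by
        refine Finset.sum_congr rfl fun r _ => ?_
        rw [moebius_sum]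
    _ = (Fintype.card {f : Fin n → Fin m // Setoid.ker f = (⊥ : Setoid (Fin n))} : ℤ) := by
        simp only [ite_mul, one_mul, zero_mul]
        rw [Finset.sum_ite_eq' univ (⊥ : Setoid (Fin n))
          (fun r => (Fintype.card {f : Fin n → Fin m // Setoid.ker f = r} : ℤ)), if_pos (mem_univ _)]
    _ = (m.descFactorial n : ℤ) := by rw [card_ker_bot]
    _ = ∏ j ∈ Finset.range n, ((m : ℤ) - j) := cast_descFactorial m n

lemma poly_eq (n : ℕ) :
    (∑ p : Setoid (Fin n), Polynomial.C (orderMoebius ⊥ p) * Polynomial.X ^ Nat.card (Quotient p))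
      = ∏ j ∈ Finset.range n, (Polynomial.X - Polynomial.C (j : ℤ)) := by
  apply Polynomial.eq_of_infinite_eval_eq
  apply Set.Infinite.mono (s := Set.range ((↑) : ℕ → ℤ))
  · rintro _ ⟨m, rfl⟩
    simp only [Set.mem_setOf_eq, Polynomial.eval_finset_sum, Polynomial.eval_mul,
      Polynomial.eval_C, Polynomial.eval_pow, Polynomial.eval_X, Polynomial.eval_prod,
      Polynomial.eval_sub, Polynomial.eval_natCast]
    exact eval_identity n m
  · exact Set.infinite_range_of_injective Nat.cast_injective

lemma reflect_prod (s : Finset ℕ) (a : ℕ → ℤ) :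
    Polynomial.reflect s.card (∏ j ∈ s, (Polynomial.X - Polynomial.C (a j)))
      = ∏ j ∈ s, (1 - Polynomial.C (a j) * Polynomial.X) := by
  induction s using Finset.induction with
  | empty => simp
  | @insert j s hj ih =>
    have h2 : (∏ i ∈ s, (Polynomial.X - Polynomial.C (a i)) : Polynomial ℤ).natDegree ≤ s.card := by
      refine le_trans (Polynomial.natDegree_prod_le s _) ?_
      simp only [← Polynomial.C_eq_intCast, Polynomial.natDegree_X_sub_C]
      simp
    rw [Finset.prod_insert hj, Finset.prod_insert hj, Finset.card_insert_of_notMem hj,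
      show s.card + 1 = 1 + s.card by omega,
      Polynomial.reflect_mul _ _ (le_of_eq (Polynomial.natDegree_X_sub_C (a j))) h2, ih]
    congr 1
    rw [sub_eq_add_neg, ← Polynomial.C_neg, Polynomial.reflect_add, Polynomial.reflect_C,
      Polynomial.reflect_one_X, Polynomial.C_neg, pow_one]
    ring

lemma card_quotient_le (n : ℕ) (q : Setoid (Fin n)) : Nat.card (Quotient q) ≤ n := by
  have := Nat.card_le_card_of_surjective (fun x : Fin n => (Quotient.mk q x))
    (fun y => Quotient.exists_rep y)
  simpa using this

lemma lhs_reflect (n : ℕ) :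
    (∑ p : Setoid (Fin n),
        Polynomial.C (orderMoebius ⊥ p) * Polynomial.X ^ (n - Nat.card (Quotient p)))
      = Polynomial.reflect n (∑ p : Setoid (Fin n),
          Polynomial.C (orderMoebius ⊥ p) * Polynomial.X ^ Nat.card (Quotient p)) := by
  rw [show (Finset.univ : Finset (Setoid (Fin n))) = Finset.univ from rfl]
  induction (Finset.univ : Finset (Setoid (Fin n))) using Finset.induction with
  | empty => simp [Polynomial.reflect_zero]
  | @insert p s hp ih =>
    rw [Finset.sum_insert hp, Finset.sum_insert hp, Polynomial.reflect_add,
      Polynomial.reflect_C_mul_X_pow, Polynomial.revAt_le (card_quotient_le n p), ih]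

/-- Whitney polynomial of the partition lattice: in `ℤ[t]`,
`∑_q μ(⊥, q) t^{n − b(q)} = ∏_{j=1}^{n−1} (1 − j·t)`, the sum over all equivalence
relations `q` on `Fin n`, where `b(q)` is the number of classes of `q`. -/
theorem whitney_polynomial_partition_lattice (n : ℕ) (hn : 1 ≤ n) :
    ∑ᶠ q : Setoid (Fin n),
        Polynomial.C (orderMoebius (⊥ : Setoid (Fin n)) q) *
          Polynomial.X ^ (n - Nat.card (Quotient q)) =
      ∏ j ∈ Finset.Icc 1 (n - 1), (1 - Polynomial.C (j : ℤ) * Polynomial.X) := by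
  rw [finsum_eq_sum_of_fintype, lhs_reflect n, poly_eq n]
  have h := reflect_prod (Finset.range n) (fun j => (j : ℤ))
  rw [Finset.card_range] at h
  rw [h, show Finset.range n = insert 0 (Finset.Icc 1 (n - 1)) by ext k; simp; omega,
    Finset.prod_insert (by simp)]
  simp
end

section
/- Let F be a finite field with q elements and let V be an F-vector space of finite dimension n. Then in the polynomial ring ℤ[t], ∑_{W} μ(W, ⊤) · t^{n − dim W} = ∏_{i=0}^{n−1} (1 − qⁱ·t), where the sum is over all linear subspaces W of V, ⊤ = V is the top element of the subspace lattice, and μ is the Möbius function of the finite lattice of subspaces of V ordered by inclusion. (This is the Whitney polynomial of the subspace lattice B_q(n), which follows from the q-binomial theorem.) -/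
open scoped Classical

instance {F V : Type*} [Field F] [Fintype F] [AddCommGroup V] [Module F V]
    [FiniteDimensional F V] : Finite (Submodule F V) :=
  haveI : Finite V := Module.finite_of_finite F
  Finite.of_injective (fun W : Submodule F V => (W : Set V)) fun _ _ h =>
    SetLike.coe_injective h

section Moebius

variable {α : Type*} [PartialOrder α] [Finite α]

lemma orderMoebius_self (x : α) : orderMoebius x x = 1 := by
  rw [orderMoebius]; simp

lemma orderMoebius_of_not_le {x y : α} (h : ¬ x ≤ y) : orderMoebius x y = 0 := by
  rw [orderMoebius]
  have hxy : x ≠ y := fun e => h (e ▸ le_refl x)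
  rw [if_neg hxy]
  have : IsEmpty {z : α // x ≤ z ∧ z < y} := by
    constructor
    rintro ⟨z, hz1, hz2⟩
    exact h (hz1.trans hz2.le)
  rw [finsum_of_isEmpty]
  simp

variable [Fintype α]

/-- The key recursion in Finset form. -/
lemma sum_orderMoebius_Icc (x y : α) :
    ∑ z ∈ Finset.univ.filter (fun z => x ≤ z ∧ z ≤ y), orderMoebius x z
      = if x = y then 1 else 0 := by
  by_cases hxy : x ≤ y
  · rcases eq_or_lt_of_le hxy with rfl | hlt
    · rw [if_pos rfl]
      have : Finset.univ.filter (fun z => x ≤ z ∧ z ≤ x) = {x} := by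
        ext z; simp [le_antisymm_iff, and_comm]
      rw [this, Finset.sum_singleton, orderMoebius_self]
    · rw [if_neg hlt.ne]
      have hsplit : Finset.univ.filter (fun z => x ≤ z ∧ z ≤ y)
          = insert y (Finset.univ.filter (fun z => x ≤ z ∧ z < y)) := by
        ext z
        simp only [Finset.mem_insert, Finset.mem_filter, Finset.mem_univ, true_and]
        constructor
        · rintro ⟨h1, h2⟩
          rcases eq_or_lt_of_le h2 with rfl | h3
          · exact Or.inl rfl
          · exact Or.inr ⟨h1, h3⟩
        · rintro (rfl | ⟨h1, h2⟩)
          · exact ⟨hxy, le_refl _⟩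
          · exact ⟨h1, h2.le⟩
      rw [hsplit, Finset.sum_insert (by simp)]
      have hrec : orderMoebius x y
          = - ∑ z ∈ Finset.univ.filter (fun z => x ≤ z ∧ z < y), orderMoebius x z := by
        rw [orderMoebius, if_neg hlt.ne]
        congr 1
        rw [finsum_eq_sum_of_fintype]
        exact (Finset.sum_subtype _ (by simp) (orderMoebius x)).symm
      rw [hrec]; ring
  · have : Finset.univ.filter (fun z => x ≤ z ∧ z ≤ y) = ∅ := by
      ext z
      simp only [Finset.mem_filter, Finset.mem_univ, true_and, Finset.notMem_empty,
        iff_false, not_and]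
      intro h1 h2; exact hxy (h1.trans h2)
    rw [this, if_neg (fun e : x = y => hxy (le_of_eq e))]
    simp

end Moebius

section Conv

variable {α : Type*} [PartialOrder α] [Finite α] [Fintype α]

/-- Convolution of kernels on a finite poset. -/
noncomputable def mconv (f g : α → α → ℤ) : α → α → ℤ := fun x y => ∑ z, f x z * g z y

/-- zeta kernel. -/
noncomputable def mzeta : α → α → ℤ := fun x y => if x ≤ y then 1 else 0

/-- delta kernel. -/
noncomputable def mdelta : α → α → ℤ := fun x y => if x = y then 1 else 0

lemma mconv_assoc (f g h : α → α → ℤ) : mconv (mconv f g) h = mconv f (mconv g h) := by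
  funext x y
  simp only [mconv, Finset.sum_mul, Finset.mul_sum]
  rw [Finset.sum_comm]
  simp [mul_assoc]

lemma mconv_mdelta (f : α → α → ℤ) : mconv f mdelta = f := by
  funext x y
  simp only [mconv, mdelta]
  rw [Finset.sum_eq_single y] <;> simp +contextual [eq_comm]

lemma mdelta_mconv (f : α → α → ℤ) : mconv mdelta f = f := by
  funext x y
  simp only [mconv, mdelta]
  rw [Finset.sum_eq_single x] <;> simp +contextual [eq_comm]

lemma mconv_moebius_zeta : mconv (fun x y : α => orderMoebius x y) mzeta = mdelta := by
  funext x y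
  simp only [mconv, mzeta, mdelta, mul_ite, mul_one, mul_zero]
  rw [← Finset.sum_filter]
  rw [← sum_orderMoebius_Icc x y]
  rw [Finset.sum_filter, Finset.sum_filter]
  apply Finset.sum_congr rfl
  intro z _
  by_cases h1 : x ≤ z <;> by_cases h2 : z ≤ y <;>
    simp [h1, h2, orderMoebius_of_not_le]

end Conv

/-- The dual Möbius kernel, defined by recursion in the first argument. -/
noncomputable def orderNu {α : Type*} [PartialOrder α] [Finite α] (y : α) : α → ℤ
  | x =>
    if x = y then 1
    else - ∑ᶠ z : {z : α // x < z ∧ z ≤ y}, orderNu y z.1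
  termination_by x => Nat.card {w : α // x < w}
  decreasing_by
    show Nat.card {w : α // (z : α) < w} < Nat.card {w : α // x < w}
    have hz : x < (z : α) := z.2.1
    have h3 : {w : α | (z : α) < w} ⊂ {w : α | x < w} :=
      ⟨fun w hw => lt_trans hz hw, fun h => lt_irrefl _ (h hz)⟩
    exact Set.ncard_lt_ncard h3 (Set.toFinite _)

section Conv2

variable {α : Type*} [PartialOrder α] [Finite α] [Fintype α]

lemma orderNu_self (x : α) : orderNu x x = 1 := by
  rw [orderNu]; simp

lemma orderNu_of_not_le {x y : α} (h : ¬ x ≤ y) : orderNu y x = 0 := by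
  rw [orderNu]
  have hxy : x ≠ y := fun e => h (le_of_eq e)
  rw [if_neg hxy]
  have : IsEmpty {z : α // x < z ∧ z ≤ y} := by
    constructor
    rintro ⟨z, hz1, hz2⟩
    exact h (hz1.le.trans hz2)
  rw [finsum_of_isEmpty]
  simp

lemma sum_orderNu_Icc (x y : α) :
    ∑ z ∈ Finset.univ.filter (fun z => x ≤ z ∧ z ≤ y), orderNu y z
      = if x = y then 1 else 0 := by
  by_cases hxy : x ≤ y
  · rcases eq_or_lt_of_le hxy with rfl | hlt
    · rw [if_pos rfl]
      have : Finset.univ.filter (fun z => x ≤ z ∧ z ≤ x) = {x} := by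
        ext z; simp [le_antisymm_iff, and_comm]
      rw [this, Finset.sum_singleton, orderNu_self]
    · rw [if_neg hlt.ne]
      have hsplit : Finset.univ.filter (fun z => x ≤ z ∧ z ≤ y)
          = insert x (Finset.univ.filter (fun z => x < z ∧ z ≤ y)) := by
        ext z
        simp only [Finset.mem_insert, Finset.mem_filter, Finset.mem_univ, true_and]
        constructor
        · rintro ⟨h1, h2⟩
          rcases eq_or_lt_of_le h1 with rfl | h3
          · exact Or.inl rfl
          · exact Or.inr ⟨h3, h2⟩
        · rintro (rfl | ⟨h1, h2⟩)
          · exact ⟨le_refl _, hxy⟩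
          · exact ⟨h1.le, h2⟩
      rw [hsplit, Finset.sum_insert (by simp)]
      have hrec : orderNu y x
          = - ∑ z ∈ Finset.univ.filter (fun z => x < z ∧ z ≤ y), orderNu y z := by
        rw [orderNu, if_neg hlt.ne]
        congr 1
        rw [finsum_eq_sum_of_fintype]
        exact (Finset.sum_subtype _ (by simp) (fun z => orderNu y z)).symm
      rw [hrec]; ring
  · have : Finset.univ.filter (fun z => x ≤ z ∧ z ≤ y) = ∅ := by
      ext z
      simp only [Finset.mem_filter, Finset.mem_univ, true_and, Finset.notMem_empty,
        iff_false, not_and]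
      intro h1 h2; exact hxy (h1.trans h2)
    rw [this, if_neg (fun e : x = y => hxy (le_of_eq e))]
    simp

lemma mconv_zeta_nu : mconv (mzeta : α → α → ℤ) (fun x y => orderNu y x) = mdelta := by
  funext x y
  simp only [mconv, mzeta, mdelta, ite_mul, one_mul, zero_mul]
  rw [← Finset.sum_filter]
  rw [← sum_orderNu_Icc x y]
  rw [Finset.sum_filter, Finset.sum_filter]
  apply Finset.sum_congr rfl
  intro z _
  by_cases h1 : x ≤ z <;> by_cases h2 : z ≤ y <;>
    simp [h1, h2, orderNu_of_not_le]

lemma orderNu_eq_moebius : (fun x y : α => orderNu y x) = fun x y => orderMoebius x y := by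
  have h1 := mconv_moebius_zeta (α := α)
  have h2 := mconv_zeta_nu (α := α)
  calc (fun x y : α => orderNu y x) = mconv mdelta (fun x y : α => orderNu y x) := (mdelta_mconv _).symm
    _ = mconv (mconv (fun x y : α => orderMoebius x y) mzeta) (fun x y : α => orderNu y x) := by rw [h1]
    _ = mconv (fun x y : α => orderMoebius x y) (mconv mzeta (fun x y : α => orderNu y x)) := mconv_assoc _ _ _
    _ = mconv (fun x y : α => orderMoebius x y) mdelta := by rw [h2]
    _ = fun x y : α => orderMoebius x y := mconv_mdelta _

lemma mconv_zeta_moebius : mconv (mzeta : α → α → ℤ) (fun x y => orderMoebius x y) = mdelta := by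
  rw [← orderNu_eq_moebius]; exact mconv_zeta_nu

/-- Möbius inversion: if `g y = ∑_{x ≤ y} f x` then `∑_x g x * μ(x, y) = f y`. -/
lemma moebius_inversion (f g : α → ℤ)
    (hg : ∀ y, g y = ∑ x ∈ Finset.univ.filter (fun x => x ≤ y), f x) (y : α) :
    ∑ x, g x * orderMoebius x y = f y := by
  have key : ∀ x, g x = ∑ u, f u * mzeta u x := by
    intro x
    rw [hg x, Finset.sum_filter]
    apply Finset.sum_congr rfl
    intro u _
    by_cases h : u ≤ x <;> simp [mzeta, h]
  calc ∑ x, g x * orderMoebius x y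
      = ∑ x, (∑ u, f u * mzeta u x) * orderMoebius x y := by
        apply Finset.sum_congr rfl; intro x _; rw [key x]
    _ = ∑ u, f u * ∑ x, mzeta u x * orderMoebius x y := by
        simp only [Finset.sum_mul, Finset.mul_sum]
        rw [Finset.sum_comm]
        simp [mul_assoc]
    _ = ∑ u, f u * mdelta u y := by
        apply Finset.sum_congr rfl; intro u _
        have := congrFun (congrFun (mconv_zeta_moebius (α := α)) u) y
        rw [← this]; rfl
    _ = f y := by
        rw [Finset.sum_eq_single y] <;> simp +contextual [mdelta, eq_comm]

end Conv2


section CountingAll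

open Module LinearMap

section Counting

variable {K : Type*} [Field K] [Fintype K]

/-- Number of injective linear maps between finite-dimensional spaces over a finite field. -/
lemma card_injective_linearMaps {V W : Type*} [AddCommGroup V] [Module K V]
    [FiniteDimensional K V] [AddCommGroup W] [Module K W] [FiniteDimensional K W]
    (h : Module.finrank K V ≤ Module.finrank K W) :
    Nat.card {g : V →ₗ[K] W // Function.Injective g} =
      ∏ i ∈ Finset.range (Module.finrank K V),
        (Fintype.card K ^ Module.finrank K W - Fintype.card K ^ i) := by
  haveI : Finite W := Module.finite_of_finite K
  set n := Module.finrank K V with hn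
  let b : Basis (Fin n) K V := Module.finBasis K V
  have e : {g : V →ₗ[K] W // Function.Injective g} ≃
      {s : Fin n → W // LinearIndependent K s} := by
    refine ⟨fun g => ⟨fun i => g.1 (b i), ?_⟩, fun s => ⟨b.constr K s.1, ?_⟩, ?_, ?_⟩
    · exact (b.linearIndependent.map' g.1 (ker_eq_bot.mpr g.2))
    · rw [← ker_eq_bot]
      rw [Submodule.eq_bot_iff]
      intro x hx
      have hx' : (b.constr K s.1) x = 0 := hx
      have hrepr : ∀ i, b.repr x i = 0 := by
        have hsum : ∑ i, b.repr x i • s.1 i = 0 := by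
          have : (b.constr K s.1) (∑ i, b.repr x i • b i) = 0 := by
            rw [b.sum_repr x]; exact hx'
          simpa [map_sum, map_smul, b.constr_basis] using this
        exact Fintype.linearIndependent_iff.mp s.2 _ hsum
      have := b.sum_repr x
      rw [← this]
      simp [hrepr]
    · intro g
      ext1
      apply b.ext
      intro i
      simp [b.constr_basis]
    · intro s
      ext1
      funext i
      simp [b.constr_basis]
  rw [Nat.card_congr e, card_linearIndependent (by omega : n ≤ Module.finrank K W)]
  rw [Finset.prod_range fun i => Fintype.card K ^ Module.finrank K W - Fintype.card K ^ i]

end Counting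

section Surj

variable {K V : Type*} [Field K] [Fintype K] [AddCommGroup V] [Module K V]
  [FiniteDimensional K V]

/-- Dualizing is a bijection on hom-spaces of finite-dimensional spaces. -/
noncomputable def dualMapEquivHom (P : Type*) [AddCommGroup P] [Module K P]
    [FiniteDimensional K P] :
    (P →ₗ[K] V) ≃ (Module.Dual K V →ₗ[K] Module.Dual K P) where
  toFun φ := φ.dualMap
  invFun g := ((Module.evalEquiv K V).symm.toLinearMap.comp g.dualMap).comp
      (Module.evalEquiv K P).toLinearMap
  left_inv φ := by
    ext x
    simp only [coe_comp, Function.comp_apply, LinearEquiv.coe_coe]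
    apply (Module.evalEquiv K V).injective
    rw [LinearEquiv.apply_symm_apply]
    ext ξ
    simp [Module.Dual.eval_apply]
  right_inv g := by
    ext ξ x
    simp [Module.Dual.eval_apply]

lemma card_surjective_linearMaps (m : ℕ) :
    (Nat.card {φ : (Fin m → K) →ₗ[K] V // Function.Surjective φ} : ℤ) =
      ∏ i ∈ Finset.range (Module.finrank K V),
        ((Fintype.card K : ℤ) ^ m - (Fintype.card K : ℤ) ^ i) := by
  set n := Module.finrank K V with hn
  have hq1 : 1 ≤ Fintype.card K := Fintype.card_pos
  have hfrP : Module.finrank K (Fin m → K) = m := by simp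
  by_cases hmn : n ≤ m
  · -- bijection with injective maps on duals
    have e : {φ : (Fin m → K) →ₗ[K] V // Function.Surjective φ} ≃
        {g : Module.Dual K V →ₗ[K] Module.Dual K (Fin m → K) // Function.Injective g} :=
      (Equiv.subtypeEquiv (dualMapEquivHom (K := K) (V := V) (Fin m → K))
        (fun φ => LinearMap.dualMap_injective_iff.symm))
    rw [Nat.card_congr e]
    have hdV : Module.finrank K (Module.Dual K V) = n := Subspace.dual_finrank_eq
    have hdP : Module.finrank K (Module.Dual K (Fin m → K)) = m := by
      rw [Subspace.dual_finrank_eq, hfrP]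
    rw [card_injective_linearMaps (by rw [hdV, hdP]; exact hmn)]
    rw [hdV, hdP, Nat.cast_prod]
    apply Finset.prod_congr rfl
    intro i hi
    have hi' : i < n := Finset.mem_range.mp hi
    have hle : Fintype.card K ^ i ≤ Fintype.card K ^ m :=
      Nat.pow_le_pow_right hq1 (by omega)
    push_cast [Nat.cast_sub hle]
    ring
  · -- no surjections, and the product has a zero factor
    have hempty : IsEmpty {φ : (Fin m → K) →ₗ[K] V // Function.Surjective φ} := by
      constructor
      rintro ⟨φ, hφ⟩
      have hr := LinearMap.lift_rank_le_of_surjective φ hφ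
      have h1 : n ≤ Module.finrank K (Fin m → K) := by
        have h2 := Cardinal.toNat_le_toNat hr
          (by rw [Cardinal.lift_lt_aleph0]; exact rank_lt_aleph0 (R := K) (Fin m → K))
        have h3 : Cardinal.toNat (Module.rank K V) ≤ m := by
          simpa [Cardinal.toNat_lift, Module.finrank] using h2
        rw [hfrP]; exact h3
      omega
    rw [Nat.card_of_isEmpty]
    have hm : m ∈ Finset.range n := Finset.mem_range.mpr (by omega)
    rw [Finset.prod_eq_zero hm (by ring)]
    simp

end Surj

section RangeCount

variable {K V : Type*} [Field K] [Fintype K] [AddCommGroup V] [Module K V]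
  [FiniteDimensional K V]

lemma card_range_le_eq (m : ℕ) (W : Submodule K V) :
    Nat.card {φ : (Fin m → K) →ₗ[K] V // LinearMap.range φ ≤ W} =
      (Fintype.card K ^ Module.finrank K W) ^ m := by
  haveI : Finite V := Module.finite_of_finite K
  haveI : Fintype W := Fintype.ofFinite W
  have e1 : {φ : (Fin m → K) →ₗ[K] V // LinearMap.range φ ≤ W} ≃ ((Fin m → K) →ₗ[K] W) := by
    refine ⟨fun φ => (φ.1).codRestrict W (fun x => φ.2 (LinearMap.mem_range_self φ.1 x)),
      fun ψ => ⟨W.subtype.comp ψ, ?_⟩, fun φ => ?_, fun ψ => ?_⟩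
    · rintro y ⟨x, rfl⟩
      simp only [LinearMap.coe_comp, Function.comp_apply, Submodule.coe_subtype]
      exact (ψ x).2
    · ext x; rfl
    · ext x; rfl
  have e2 : ((Fin m → K) →ₗ[K] W) ≃ (Fin m → W) :=
    ((Pi.basisFun K (Fin m)).constr (M' := W) K).symm.toEquiv
  rw [Nat.card_congr (e1.trans e2), Nat.card_pi]
  have hcW : Nat.card W = Fintype.card K ^ Module.finrank K W := by
    rw [Nat.card_eq_fintype_card, card_eq_pow_finrank (K := K)]
  simp only [hcW, Finset.prod_const, Finset.card_univ, Fintype.card_fin]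

lemma sum_card_range_eq [Fintype (Submodule K V)] (m : ℕ) (W : Submodule K V) :
    ∑ U ∈ (Finset.univ (α := Submodule K V)).filter (fun U => U ≤ W),
        (Nat.card {φ : (Fin m → K) →ₗ[K] V // LinearMap.range φ = U} : ℤ)
      = (Nat.card {φ : (Fin m → K) →ₗ[K] V // LinearMap.range φ ≤ W} : ℤ) := by
  haveI : Finite V := Module.finite_of_finite K
  haveI : Finite ((Fin m → K) →ₗ[K] V) :=
    Finite.of_injective (fun f => (f : (Fin m → K) → V)) DFunLike.coe_injective
  haveI : Fintype ((Fin m → K) →ₗ[K] V) := Fintype.ofFinite _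
  have hcard : ∀ p : ((Fin m → K) →ₗ[K] V) → Prop,
      Nat.card {φ : (Fin m → K) →ₗ[K] V // p φ} = (Finset.univ.filter p).card := by
    intro p
    rw [Nat.card_eq_fintype_card, Fintype.card_subtype]
  have key := Finset.card_eq_sum_card_fiberwise
    (s := Finset.univ.filter (fun φ : (Fin m → K) →ₗ[K] V => LinearMap.range φ ≤ W))
    (t := Finset.univ.filter (fun U : Submodule K V => U ≤ W))
    (f := fun φ => LinearMap.range φ)
    (by intro φ hφ
        simp only [Finset.coe_filter, Finset.mem_coe, Set.mem_setOf_eq, Finset.mem_filter, Finset.mem_univ, true_and] at hφ ⊢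
        exact hφ)
  rw [hcard]
  rw [key]
  push_cast
  apply Finset.sum_congr rfl
  intro U hU
  simp only [Finset.mem_filter, Finset.mem_univ, true_and] at hU
  rw [hcard]
  rw [Nat.cast_inj]
  apply congrArg Finset.card
  ext φ
  simp only [Finset.mem_filter, Finset.mem_univ, true_and]
  constructor
  · rintro h; exact ⟨h ▸ hU, h⟩
  · rintro ⟨_, h⟩; exact h

end RangeCount

end CountingAll

section PolyAux

open Polynomial

lemma reflect_finset_sum {ι : Type*} (s : Finset ι) (N : ℕ) (f : ι → ℤ[X]) :
    reflect N (∑ i ∈ s, f i) = ∑ i ∈ s, reflect N (f i) := by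
  classical
  induction s using Finset.induction with
  | empty => simp [reflect_zero]
  | insert _ _ h ih => rw [Finset.sum_insert h, Finset.sum_insert h, reflect_add, ih]

lemma reflect_one_X_sub_C (a : ℤ) : reflect 1 (X - C a) = 1 - C a * X := by
  rw [reflect_sub]
  have h1 : reflect 1 (X : ℤ[X]) = 1 := by
    have := reflect_monomial 1 1 (R := ℤ)
    simpa [revAt_le] using this
  have h2 : reflect 1 (C a) = C a * X := by
    have := reflect_C_mul_X_pow 1 0 (c := a)
    simpa [revAt_le] using this
  rw [h1, h2]

lemma reflect_prod_X_sub_C (c : ℕ → ℤ) (k : ℕ) :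
    reflect k (∏ i ∈ Finset.range k, (X - C (c i))) =
      ∏ i ∈ Finset.range k, (1 - C (c i) * X) := by
  induction k with
  | zero => simp [Finset.range_zero, Finset.prod_empty]
    -- reflect 0 1 = 1
  | succ k ih =>
    rw [Finset.prod_range_succ, Finset.prod_range_succ]
    have hA : (∏ i ∈ Finset.range k, (X - C (c i))).natDegree ≤ k := by
      refine le_trans (Polynomial.natDegree_prod_le _ _) ?_
      have : ∑ i ∈ Finset.range k, (X - C (c i)).natDegree = k := by
        rw [Finset.sum_congr rfl (fun i _ => natDegree_X_sub_C (c i))]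
        simp
      omega
    have hB : (X - C (c k)).natDegree ≤ 1 := le_of_eq (natDegree_X_sub_C (c k))
    rw [show k + 1 = k + 1 from rfl, reflect_mul _ _ hA hB, ih, reflect_one_X_sub_C]

end PolyAux

/-- Whitney polynomial of the subspace lattice: for a finite field `F`
with `q` elements and an `n`-dimensional `F`-vector space `V`, in `ℤ[t]`,
`∑_W μ(W, ⊤) t^{n − dim W} = ∏_{i=0}^{n−1} (1 − qⁱ·t)`, the sum over all subspaces
`W ⊆ V`. -/
theorem whitney_polynomial_subspace_lattice {F V : Type*} [Field F] [Fintype F]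
    [AddCommGroup V] [Module F V] [FiniteDimensional F V] :
    ∑ᶠ W : Submodule F V,
        Polynomial.C (orderMoebius W (⊤ : Submodule F V)) *
          Polynomial.X ^ (Module.finrank F V - Module.finrank F W) =
      ∏ i ∈ Finset.range (Module.finrank F V),
        (1 - Polynomial.C ((Fintype.card F : ℤ) ^ i) * Polynomial.X) := by
  classical
  haveI : Finite V := Module.finite_of_finite F
  haveI : Fintype (Submodule F V) := Fintype.ofFinite _
  set n := Module.finrank F V with hn
  rw [finsum_eq_sum_of_fintype]
  set P : Polynomial ℤ := ∑ W : Submodule F V,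
      Polynomial.C (orderMoebius W (⊤ : Submodule F V)) *
        Polynomial.X ^ (Module.finrank F W) with hP
  have hq1 : (1 : ℤ) < (Fintype.card F : ℤ) := by
    exact_mod_cast Fintype.one_lt_card
  have hPQ : P = ∏ i ∈ Finset.range n,
      (Polynomial.X - Polynomial.C ((Fintype.card F : ℤ) ^ i)) := by
    apply Polynomial.eq_of_infinite_eval_eq
    apply Set.Infinite.mono
      (s := Set.range fun m : ℕ => (Fintype.card F : ℤ) ^ m)
    · rintro _ ⟨m, rfl⟩
      show Polynomial.eval _ P = Polynomial.eval _ _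
      -- Möbius inversion with counting of linear maps
      set f : Submodule F V → ℤ := fun U =>
        (Nat.card {φ : (Fin m → F) →ₗ[F] V // LinearMap.range φ = U} : ℤ) with hf
      set g : Submodule F V → ℤ := fun W =>
        ((Fintype.card F : ℤ) ^ m) ^ (Module.finrank F W) with hg
      have hgf : ∀ W, g W = ∑ U ∈ Finset.univ.filter (fun U => U ≤ W), f U := by
        intro W
        rw [sum_card_range_eq m W, card_range_le_eq m W]
        rw [hg]
        push_cast
        rw [pow_right_comm]
      have hinv := moebius_inversion f g hgf (⊤ : Submodule F V)
      have hftop : f ⊤ = ∏ i ∈ Finset.range n,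
          ((Fintype.card F : ℤ) ^ m - (Fintype.card F : ℤ) ^ i) := by
        show (Nat.card {φ : (Fin m → F) →ₗ[F] V //
          LinearMap.range φ = (⊤ : Submodule F V)} : ℤ) = _
        rw [Nat.card_congr (Equiv.subtypeEquivRight
          (fun φ : (Fin m → F) →ₗ[F] V => LinearMap.range_eq_top))]
        exact card_surjective_linearMaps m
      rw [hP, Polynomial.eval_finset_sum]
      simp only [Polynomial.eval_mul, Polynomial.eval_C, Polynomial.eval_pow,
        Polynomial.eval_X]
      rw [Polynomial.eval_prod]
      simp only [Polynomial.eval_sub, Polynomial.eval_X, Polynomial.eval_C]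
      rw [← hftop, ← hinv]
      apply Finset.sum_congr rfl
      intro W _
      rw [hg, mul_comm]
    · apply Set.infinite_range_of_injective
      have hm : StrictMono fun m : ℕ => (Fintype.card F : ℤ) ^ m := fun a b hab => by
        exact pow_lt_pow_right₀ hq1 hab
      exact hm.injective
  have hL : ∑ W : Submodule F V,
      Polynomial.C (orderMoebius W (⊤ : Submodule F V)) *
        Polynomial.X ^ (n - Module.finrank F W) = Polynomial.reflect n P := by
    rw [hP, reflect_finset_sum]
    apply Finset.sum_congr rfl
    intro W _
    rw [Polynomial.reflect_C_mul_X_pow, Polynomial.revAt_le (Submodule.finrank_le W)]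
  rw [hL, hPQ, reflect_prod_X_sub_C (fun i => (Fintype.card F : ℤ) ^ i) n]
end
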